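/- Let (x_n) be a summable sequence of real numbers and define f : {0,1}^ℕ → ℝ by f((ε_n)) = ∑_{n=1}^∞ ε_n x_n. If the achievement set E(x_n) has nonempty interior in ℝ, then f is semi-open. -/

import Mathlib

open Set Topology

noncomputable section

/-- The achievement set (set of subsums) of a series `∑ xₙ`. -/
def achSet (x : ℕ → ℝ) : Set ℝ := {t : ℝ | ∃ A : Set ℕ, t = ∑' n : A, x n}

/-- The natural map from the Cantor space to `ℝ` given by `(εₙ) ↦ ∑ εₙ xₙ`. -/
def sumMap (x : ℕ → ℝ) (ε : ℕ → Bool) : ℝ := ∑' n : ℕ, if ε n then x n else 0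

/-- A function on the Cantor space is semi-open if the image of every nonempty open set
has nonempty interior in `ℝ`. -/
def SemiOpen (f : (ℕ → Bool) → ℝ) : Prop :=
  ∀ V : Set (ℕ → Bool), IsOpen V → V.Nonempty → (interior (f '' V)).Nonempty

/-- The tail of the sequence: zero below `N`. -/
def tailSeq (x : ℕ → ℝ) (N : ℕ) : ℕ → ℝ := fun n => if n < N then 0 else x n

lemma tailSeq_summable {x : ℕ → ℝ} (hsum : Summable x) (N : ℕ) :
    Summable (tailSeq x N) := by
  have h : tailSeq x N = Set.indicator {n | ¬ n < N} x := by
    funext n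
    by_cases h : n < N
    · simp [tailSeq, Set.indicator, h, h.not_ge]
    · simp [tailSeq, Set.indicator, h, Nat.not_lt.mp h]
  rw [h]; exact hsum.indicator _

lemma summable_ite {x : ℕ → ℝ} (hsum : Summable x) (ε : ℕ → Bool) :
    Summable (fun n => if ε n then x n else 0) := by
  have h : (fun n => if ε n then x n else 0) = Set.indicator {n | ε n = true} x := by
    funext n; by_cases h : ε n <;> simp [Set.indicator, h]
  rw [h]; exact hsum.indicator _

lemma continuous_sumMap' {x : ℕ → ℝ} (hsum : Summable x) : Continuous (sumMap x) := by
  have : Continuous fun ε : ℕ → Bool => ∑' n : ℕ, (fun n (ε : ℕ → Bool) =>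
      if ε n then x n else 0) n ε := by
    apply continuous_tsum
    · intro n
      exact (continuous_of_discreteTopology (f := fun b : Bool => if b then x n else 0)).comp
        (continuous_apply n)
    · exact hsum.abs
    · intro n ε
      by_cases h : ε n <;> simp [h, abs_nonneg]
  exact this

lemma achSet_eq_range (x : ℕ → ℝ) : achSet x = Set.range (sumMap x) := by
  classical
  ext t
  constructor
  · rintro ⟨A, rfl⟩
    refine ⟨fun n => decide (n ∈ A), ?_⟩
    rw [sumMap, tsum_subtype]
    congr 1; funext n
    by_cases h : n ∈ A <;> simp [Set.indicator, h]
  · rintro ⟨ε, rfl⟩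
    refine ⟨{n | ε n = true}, ?_⟩
    rw [tsum_subtype, sumMap]
    congr 1; funext n
    by_cases h : ε n <;> simp [Set.indicator, h]

lemma isCompact_achSet {x : ℕ → ℝ} (hsum : Summable x) : IsCompact (achSet x) := by
  rw [achSet_eq_range]
  exact isCompact_range (continuous_sumMap' hsum)

lemma sumMap_split {x : ℕ → ℝ} (hsum : Summable x) (N : ℕ) (ε : ℕ → Bool) :
    sumMap x ε
      = (∑ n ∈ Finset.range N, if ε n then x n else 0) + sumMap (tailSeq x N) ε := by
  have hfun : ∀ n, (if ε n then x n else 0)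
      = (if n < N then (if ε n then x n else 0) else 0)
        + (if ε n then tailSeq x N n else 0) := by
    intro n
    by_cases h1 : n < N <;> by_cases h2 : ε n <;> simp [tailSeq, h1, h2]
  have hg : Summable (fun n => if n < N then (if ε n then x n else 0) else 0) := by
    apply summable_of_ne_finset_zero (s := Finset.range N)
    intro n hn
    simp only [Finset.mem_range] at hn
    simp [hn]
  have hh : Summable (fun n => if ε n then tailSeq x N n else 0) :=
    summable_ite (tailSeq_summable hsum N) ε
  have hcong : ∑' n : ℕ, (if ε n then x n else 0)
      = ∑' n : ℕ, ((if n < N then (if ε n then x n else 0) else 0)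
        + (if ε n then tailSeq x N n else 0)) :=
    tsum_congr hfun
  rw [sumMap, hcong, Summable.tsum_add hg hh]
  congr 1
  · rw [tsum_eq_sum (s := Finset.range N) (by intro n hn; simp only [Finset.mem_range] at hn; simp [hn])]
    apply Finset.sum_congr rfl
    intro n hn
    simp [Finset.mem_range.mp hn]

lemma interior_union_closed {A B : Set ℝ} (hA : IsClosed A)
    (h : (interior (A ∪ B)).Nonempty) :
    (interior A).Nonempty ∨ (interior B).Nonempty := by
  by_cases hIA : (interior A).Nonempty
  · exact Or.inl hIA
  · right
    have hU : IsOpen (interior (A ∪ B) \ A) := isOpen_interior.sdiff hA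
    have hsub : interior (A ∪ B) \ A ⊆ B := fun y hy =>
      (interior_subset hy.1).resolve_left hy.2
    have hne : (interior (A ∪ B) \ A).Nonempty := by
      by_contra hcon
      rw [Set.not_nonempty_iff_eq_empty, Set.diff_eq_empty] at hcon
      exact hIA (h.mono (interior_maximal hcon isOpen_interior))
    obtain ⟨y, hy⟩ := hne
    exact ⟨y, interior_maximal hsub hU hy⟩

lemma finset_union_closed {ι : Type*} (S : Finset ι) (f : ι → Set ℝ)
    (hcl : ∀ i ∈ S, IsClosed (f i))
    (h : (interior (⋃ i ∈ S, f i)).Nonempty) :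
    ∃ i ∈ S, (interior (f i)).Nonempty := by
  classical
  induction S using Finset.induction with
  | empty => simp at h
  | @insert a S hnotmem ih =>
    rw [Finset.set_biUnion_insert] at h
    rcases interior_union_closed (hcl _ (Finset.mem_insert_self _ _)) h with h1 | h2
    · exact ⟨a, Finset.mem_insert_self _ _, h1⟩
    · obtain ⟨i, hi, hgood⟩ := ih (fun i hi => hcl i (Finset.mem_insert_of_mem hi)) h2
      exact ⟨i, Finset.mem_insert_of_mem hi, hgood⟩

lemma achSet_subset_union {x : ℕ → ℝ} (hsum : Summable x) (N : ℕ) :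
    achSet x ⊆ ⋃ T ∈ (Finset.range N).powerset,
      (fun r => (∑ n ∈ T, x n) + r) '' achSet (tailSeq x N) := by
  classical
  rintro t ⟨A, rfl⟩
  set T := (Finset.range N).filter (fun n => n ∈ A) with hT
  have hTmem : T ∈ (Finset.range N).powerset :=
    Finset.mem_powerset.mpr (Finset.filter_subset _ _)
  apply Set.mem_biUnion hTmem
  refine ⟨∑' n : A, tailSeq x N n, ⟨A, rfl⟩, ?_⟩
  have hfun : ∀ n, Set.indicator A x n
      = (if n < N then Set.indicator A x n else 0)
        + Set.indicator A (tailSeq x N) n := by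
    intro n
    by_cases h1 : n < N <;> by_cases h2 : n ∈ A <;>
      simp [tailSeq, Set.indicator, h1, h2]
  have hg : Summable (fun n => if n < N then Set.indicator A x n else 0) := by
    apply summable_of_ne_finset_zero (s := Finset.range N)
    intro n hn
    simp only [Finset.mem_range] at hn
    simp [hn]
  have hh : Summable fun n => Set.indicator A (tailSeq x N) n :=
    (tailSeq_summable hsum N).indicator _
  have hcong : ∑' n : ℕ, Set.indicator A x n
      = ∑' n : ℕ, ((if n < N then Set.indicator A x n else 0)
        + Set.indicator A (tailSeq x N) n) := tsum_congr hfun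
  have hhead : ∑' n : ℕ, (if n < N then Set.indicator A x n else 0)
      = ∑ n ∈ T, x n := by
    rw [tsum_eq_sum (s := Finset.range N)
      (f := fun n => if n < N then Set.indicator A x n else 0)
      (by intro n hn; simp only [Finset.mem_range] at hn; simp [hn])]
    have hfil : ∑ n ∈ T, x n = ∑ n ∈ Finset.range N, if n ∈ A then x n else 0 :=
      Finset.sum_filter _ _
    rw [hfil]
    apply Finset.sum_congr rfl
    intro n hn
    by_cases h2 : n ∈ A <;> simp [Set.indicator, h2, Finset.mem_range.mp hn]
  rw [tsum_subtype, tsum_subtype, hcong, Summable.tsum_add hg hh, hhead]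

lemma interior_translate_nonempty_iff (c : ℝ) (s : Set ℝ) :
    (interior ((fun r => c + r) '' s)).Nonempty ↔ (interior s).Nonempty := by
  have himg : (fun r => c + r) '' s = (Homeomorph.addLeft c) '' s := rfl
  rw [himg, ← Homeomorph.image_interior, Set.image_nonempty]

lemma exists_cylinder {V : Set (ℕ → Bool)} (hV : IsOpen V) {ε₀ : ℕ → Bool}
    (hmem : ε₀ ∈ V) : ∃ N, {ε : ℕ → Bool | ∀ n < N, ε n = ε₀ n} ⊆ V := by
  rcases isOpen_pi_iff.mp hV ε₀ hmem with ⟨I, u, hu, hsub⟩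
  refine ⟨(I.sup id) + 1, ?_⟩
  intro ε hε
  apply hsub
  intro i hi
  have hi' : i ∈ I := hi
  have : ε i = ε₀ i := hε i (Nat.lt_succ_of_le (Finset.le_sup (f := id) hi'))
  rw [this]
  exact (hu i hi').2

theorem sumMap_semiOpen (x : ℕ → ℝ) (hsum : Summable x)
    (hint : (interior (achSet x)).Nonempty) :
    SemiOpen (sumMap x) := by
  classical
  intro V hV hne
  obtain ⟨ε₀, hε₀⟩ := hne
  obtain ⟨N, hcyl⟩ := exists_cylinder hV hε₀
  set y := tailSeq x N with hy_def
  have hy : Summable y := tailSeq_summable hsum N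
  have h1 : (interior (⋃ T ∈ (Finset.range N).powerset,
      (fun r => (∑ n ∈ T, x n) + r) '' achSet y)).Nonempty :=
    hint.mono (interior_mono (achSet_subset_union hsum N))
  have h2 : ∃ T ∈ (Finset.range N).powerset,
      (interior ((fun r => (∑ n ∈ T, x n) + r) '' achSet y)).Nonempty := by
    apply finset_union_closed _ _ ?_ h1
    intro T _
    exact (((isCompact_achSet hy).image (continuous_const.add continuous_id))).isClosed
  obtain ⟨T, _, hT⟩ := h2
  have h3 : (interior (achSet y)).Nonempty :=
    (interior_translate_nonempty_iff _ _).mp hT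
  set c₀ := ∑ n ∈ Finset.range N, if ε₀ n then x n else 0 with hc₀
  have h4 : (interior ((fun r => c₀ + r) '' achSet y)).Nonempty :=
    (interior_translate_nonempty_iff _ _).mpr h3
  refine h4.mono (interior_mono ?_)
  rintro t ⟨s, ⟨B, rfl⟩, rfl⟩
  set ε : ℕ → Bool := fun n => if n < N then ε₀ n else decide (n ∈ B) with hε_def
  have hεV : ε ∈ V := hcyl (fun n hn => by simp [hε_def, hn])
  refine ⟨ε, hεV, ?_⟩
  rw [sumMap_split hsum N]
  congr 1
  · apply Finset.sum_congr rfl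
    intro n hn
    simp [hε_def, Finset.mem_range.mp hn]
  · rw [sumMap, tsum_subtype]
    congr 1; funext n
    by_cases h1 : n < N
    · have hyn : y n = 0 := by simp [hy_def, tailSeq, h1]
      have hyn' : tailSeq x N n = 0 := by simp [tailSeq, h1]
      by_cases h2 : ε n <;> simp [Set.indicator, h2, hyn, hyn']
    · by_cases h2 : n ∈ B <;> simp [Set.indicator, hε_def, h1, h2, hy_def]
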